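/- Let R be a Noetherian ring and M an Artinian R-module. For any prime p, the set of attached primes of the co-localization Hom_R(R_p, M) as an R_p-module equals {qR_p | q ∈ Att_R(M), q ⊆ p}. -/

import Mathlib

/-- `p` is an attached prime of `M` iff `p` is prime and is the annihilator of some quotient
of `M`. -/
def IsAttachedPrime (R : Type*) [CommRing R] (M : Type*) [AddCommGroup M] [Module R M]
    (p : Ideal R) : Prop :=
  p.IsPrime ∧ ∃ N : Submodule R M, Module.annihilator R (M ⧸ N) = p

section

variable {R : Type*} [CommRing R] {M : Type*} [AddCommGroup M] [Module R M]
  (p : Ideal R) [p.IsPrime]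

/-- The `R_p`-module structure on the co-localization `Hom_R(R_p, M)`, where `a ∈ R_p` acts by
precomposition with multiplication by `a`. -/
noncomputable instance colocalizationModule :
    Module (Localization.AtPrime p) (Localization.AtPrime p →ₗ[R] M) where
  smul a f := f.comp (LinearMap.mulLeft R a)
  one_smul f := LinearMap.ext fun y => by show f (1 * y) = f y; rw [one_mul]
  mul_smul a b f := LinearMap.ext fun y => by
    show f (a * b * y) = f (b * (a * y)); congr 1; ring
  smul_zero a := LinearMap.ext fun y => rfl
  smul_add a f g := LinearMap.ext fun y => rfl
  add_smul a b f := LinearMap.ext fun y => by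
    show f ((a + b) * y) = f (a * y) + f (b * y); rw [add_mul, map_add]
  zero_smul f := LinearMap.ext fun y => by
    show f (0 * y) = 0; rw [zero_mul, map_zero]

end


section ArtinianCoset
variable {R : Type*} [CommRing R] {M : Type*} [AddCommGroup M] [Module R M]

/-- The coset `v + K` as a set. -/
def cosetOf (K : Submodule R M) (v : M) : Set M := {x | ∃ k ∈ K, x = v + k}

lemma mem_cosetOf_self (K : Submodule R M) (v : M) : v ∈ cosetOf K v :=
  ⟨0, K.zero_mem, by simp⟩

/-- In an Artinian module, a codirected family of cosets has a common point. -/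
theorem exists_mem_all_of_directed [IsArtinian R M] {ι : Type*} [Nonempty ι]
    (K : ι → Submodule R M) (v : ι → M)
    (hdir : ∀ i j, ∃ k, cosetOf (K k) (v k) ⊆ cosetOf (K i) (v i) ∧
      cosetOf (K k) (v k) ⊆ cosetOf (K j) (v j)) :
    ∃ x, ∀ i, x ∈ cosetOf (K i) (v i) := by
  obtain ⟨K₀, ⟨i₀, hi₀⟩, hmin⟩ :=
    IsArtinian.set_has_minimal (R := R) (M := M) (Set.range K) (Set.range_nonempty K)
  refine ⟨v i₀, fun j => ?_⟩
  obtain ⟨k, hk₁, hk₂⟩ := hdir i₀ j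
  obtain ⟨k₁, hk₁K, hvk⟩ := hk₁ (mem_cosetOf_self _ _)
  have hle : K k ≤ K i₀ := by
    intro d hd
    obtain ⟨d', hd', hd''⟩ := hk₁ ⟨d, hd, rfl⟩
    have : d = d' - k₁ := by
      have h1 : v i₀ + k₁ + d = v i₀ + d' := by rw [← hvk]; exact hd''
      have h2 : k₁ + d = d' := by
        have := congrArg (fun z => z - v i₀) h1
        simpa [add_sub_cancel_left, add_assoc] using this
      linear_combination (norm := abel) h2
    rw [this]; exact sub_mem hd' hk₁K
  have heq : K k = K i₀ := by
    rcases lt_or_eq_of_le hle with h | h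
    · exact absurd (hi₀ ▸ h) (hmin (K k) ⟨k, rfl⟩)
    · exact h
  have : v i₀ ∈ cosetOf (K k) (v k) := by
    refine ⟨-k₁, neg_mem (heq ▸ hk₁K), ?_⟩
    rw [hvk]; abel
  exact hk₂ this

end ArtinianCoset
section Thread
variable {R : Type*} [CommRing R] {M : Type*} [AddCommGroup M] [Module R M]
variable {S : Submonoid R}

/-- The submodule of "directions" for the affine constraint system appearing in
`exists_thread`. -/
def threadDir (K : S → Submodule R M) (F : Finset (S × S)) (G₀ : Finset (S × M)) :
    Submodule R (S → M) where
  carrier := {d | (∀ s, d s ∈ K s) ∧ (∀ pr ∈ F, (pr.2 : R) • d (pr.1 * pr.2) = d pr.1) ∧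
    ∀ pr ∈ G₀, d pr.1 = 0}
  add_mem' := by
    rintro a b ⟨ha1, ha2, ha3⟩ ⟨hb1, hb2, hb3⟩
    refine ⟨fun s => (K s).add_mem (ha1 s) (hb1 s), fun pr h => ?_, fun pr h => ?_⟩
    · simp only [Pi.add_apply, smul_add, ha2 pr h, hb2 pr h]
    · simp only [Pi.add_apply, ha3 pr h, hb3 pr h, add_zero]
  zero_mem' := ⟨fun s => (K s).zero_mem, by simp, by simp⟩
  smul_mem' := by
    rintro c a ⟨ha1, ha2, ha3⟩
    refine ⟨fun s => (K s).smul_mem c (ha1 s), fun pr h => ?_, fun pr h => ?_⟩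
    · simp only [Pi.smul_apply, smul_comm (pr.2 : R) c, ha2 pr h]
    · simp only [Pi.smul_apply, ha3 pr h, smul_zero]

theorem exists_thread [IsArtinian R M]
    (X : S → Set M) (K : S → Submodule R M) (x₀ : S → M)
    (hX : ∀ s, X s = cosetOf (K s) (x₀ s))
    (hFS : ∀ F : Finset (S × S), ∃ m : S → M, (∀ s, m s ∈ X s) ∧
      ∀ pr ∈ F, (pr.2 : R) • m (pr.1 * pr.2) = m pr.1) :
    ∃ m : S → M, (∀ s, m s ∈ X s) ∧ ∀ s u : S, (u : R) • m (s * u) = m s := by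
  classical
  set Good : Set (S × M) → Prop := fun G =>
    ∀ (F : Finset (S × S)) (G₀ : Finset (S × M)), ↑G₀ ⊆ G →
      ∃ m : S → M, (∀ s, m s ∈ X s) ∧ (∀ pr ∈ F, (pr.2 : R) • m (pr.1 * pr.2) = m pr.1) ∧
        ∀ pr ∈ G₀, m pr.1 = pr.2 with hGoodDef
  have hchaincond : ∀ c ⊆ {G | Good G}, IsChain (· ⊆ ·) c → c.Nonempty →
      ∃ ub ∈ {G | Good G}, ∀ s ∈ c, s ⊆ ub := by
    intro c hc hchain hne
    refine ⟨⋃₀ c, ?_, fun s hs => Set.subset_sUnion_of_mem hs⟩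
    have key : ∀ G₀ : Finset (S × M), ↑G₀ ⊆ ⋃₀ c → ∃ t ∈ c, (G₀ : Set (S × M)) ⊆ t := by
      intro G₀
      induction G₀ using Finset.induction with
      | empty => intro _; obtain ⟨t, ht⟩ := hne; exact ⟨t, ht, by simp⟩
      | @insert a G₀' ha ih =>
        intro hsub
        rw [Finset.coe_insert, Set.insert_subset_iff] at hsub
        obtain ⟨t₁, ht₁, hsub₁⟩ := ih hsub.2
        obtain ⟨t₂, ht₂, hat₂⟩ := hsub.1
        rcases hchain.total ht₁ ht₂ with h | h
        · exact ⟨t₂, ht₂, by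
            rw [Finset.coe_insert, Set.insert_subset_iff]
            exact ⟨hat₂, hsub₁.trans h⟩⟩
        · exact ⟨t₁, ht₁, by
            rw [Finset.coe_insert, Set.insert_subset_iff]
            exact ⟨h hat₂, hsub₁⟩⟩
    intro F G₀ hG₀
    obtain ⟨t, htc, hsubt⟩ := key G₀ hG₀
    exact hc htc F G₀ hsubt
  have hemptycond : Good ∅ := by
    intro F G₀ hG₀
    have : G₀ = ∅ := by
      simpa [Set.subset_empty_iff, Finset.coe_eq_empty] using hG₀
    subst this
    obtain ⟨m, h1, h2⟩ := hFS F
    exact ⟨m, h1, h2, by simp⟩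
  obtain ⟨G, -, hGmax⟩ := zorn_subset_nonempty {G | Good G} hchaincond ∅ hemptycond
  · have hGood : Good G := hGmax.1
    have key : ∀ t : S, ∃ v, (t, v) ∈ G := by
      intro t
      by_contra hno
      push_neg at hno
      let ι := Finset (S × S) × {G₀ : Finset (S × M) // (G₀ : Set (S × M)) ⊆ G}
      haveI : Nonempty ι := ⟨⟨∅, ⟨∅, by simp⟩⟩⟩
      choose wit hwit1 hwit2 hwit3 using fun i : ι => hGood i.1 i.2.1 i.2.2
      let D : ι → Submodule R M := fun i =>
        (threadDir K i.1 i.2.1).map (LinearMap.proj (R := R) (φ := fun _ : S => M) t)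
      let V : ι → M := fun i => wit i t
      have hE : ∀ (i : ι) (y : M), y ∈ cosetOf (D i) (V i) ↔
          ∃ m : S → M, (∀ s, m s ∈ X s) ∧ (∀ pr ∈ i.1, (pr.2 : R) • m (pr.1 * pr.2) = m pr.1) ∧
            (∀ pr ∈ i.2.1, m pr.1 = pr.2) ∧ m t = y := by
        intro i y
        constructor
        · rintro ⟨k, hk, rfl⟩
          obtain ⟨d, hd, rfl⟩ := hk
          obtain ⟨hd1, hd2, hd3⟩ := hd
          refine ⟨wit i + d, fun s => ?_, fun pr hpr => ?_, fun pr hpr => ?_, rfl⟩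
          · have := hwit1 i s
            rw [hX s] at this ⊢
            obtain ⟨k₂, hk₂, hw⟩ := this
            exact ⟨k₂ + d s, (K s).add_mem hk₂ (hd1 s), by
              simp only [Pi.add_apply, hw]; abel⟩
          · simp only [Pi.add_apply, smul_add, hwit2 i pr hpr, hd2 pr hpr]
          · simp only [Pi.add_apply, hwit3 i pr hpr, hd3 pr hpr, add_zero]
        · rintro ⟨m, h1, h2, h3, rfl⟩
          refine ⟨m t - wit i t, ⟨m - wit i, ⟨fun s => ?_, fun pr hpr => ?_, fun pr hpr => ?_⟩,
            rfl⟩, by abel⟩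
          · have ha := h1 s; have hb := hwit1 i s
            rw [hX s] at ha hb
            obtain ⟨k₁, hk₁, hma⟩ := ha
            obtain ⟨k₂, hk₂, hmb⟩ := hb
            have : m s - wit i s = k₁ - k₂ := by rw [hma, hmb]; abel
            rw [Pi.sub_apply, this]
            exact sub_mem hk₁ hk₂
          · simp only [Pi.sub_apply, smul_sub, h2 pr hpr, hwit2 i pr hpr]
          · simp only [Pi.sub_apply, h3 pr hpr, hwit3 i pr hpr, sub_self]
      obtain ⟨y, hy⟩ := exists_mem_all_of_directed D V (fun i j => by
        refine ⟨⟨i.1 ∪ j.1, ⟨i.2.1 ∪ j.2.1, ?_⟩⟩, ?_, ?_⟩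
        · rw [Finset.coe_union]; exact Set.union_subset i.2.2 j.2.2
        · intro z hz
          rw [hE] at hz ⊢
          obtain ⟨m, h1, h2, h3, h4⟩ := hz
          exact ⟨m, h1, fun pr hpr => h2 pr (Finset.mem_union_left _ hpr),
            fun pr hpr => h3 pr (Finset.mem_union_left _ hpr), h4⟩
        · intro z hz
          rw [hE] at hz ⊢
          obtain ⟨m, h1, h2, h3, h4⟩ := hz
          exact ⟨m, h1, fun pr hpr => h2 pr (Finset.mem_union_right _ hpr),
            fun pr hpr => h3 pr (Finset.mem_union_right _ hpr), h4⟩)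
      have hGood' : Good (insert (t, y) G) := by
        intro F G₁ hG₁
        have hsub : ((G₁.erase (t, y) : Finset (S × M)) : Set (S × M)) ⊆ G := by
          intro pr hpr
          rw [Finset.coe_erase] at hpr
          obtain ⟨hpr1, hpr2⟩ := hpr
          rcases hG₁ hpr1 with h | h
          · exact absurd h hpr2
          · exact h
        obtain ⟨m, h1, h2, h3, h4⟩ := (hE ⟨F, ⟨G₁.erase (t, y), hsub⟩⟩ y).mp (hy _)
        refine ⟨m, h1, h2, fun pr hpr => ?_⟩
        by_cases hpr' : pr = (t, y)
        · subst hpr'; exact h4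
        · exact h3 pr (Finset.mem_erase.mpr ⟨hpr', hpr⟩)
      have hsub := hGmax.2 hGood' (Set.subset_insert _ _)
      exact hno y (hsub (Set.mem_insert _ _))
    choose m hm using key
    refine ⟨m, fun s => ?_, fun s u => ?_⟩
    · obtain ⟨m', h1, -, h3⟩ := hGood ∅ {(s, m s)} (by
        intro pr hpr
        simp only [Finset.coe_singleton, Set.mem_singleton_iff] at hpr
        subst hpr; exact hm s)
      have h : m' s = m s := h3 (s, m s) (Finset.mem_singleton_self _)
      rw [← h]; exact h1 s
    · obtain ⟨m', -, h2, h3⟩ := hGood {(s, u)} {(s, m s), (s * u, m (s * u))} (by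
        intro pr hpr
        simp only [Finset.coe_insert, Finset.coe_singleton, Set.mem_insert_iff,
          Set.mem_singleton_iff] at hpr
        rcases hpr with h | h
        · subst h; exact hm s
        · subst h; exact hm (s * u))
      have e1 : m' s = m s := h3 (s, m s) (by simp)
      have e2 : m' (s * u) = m (s * u) := h3 (s * u, m (s * u)) (by simp)
      have := h2 (s, u) (Finset.mem_singleton_self _)
      simpa [e1, e2] using this

end Thread
section ThreadMap
variable {R : Type*} [CommRing R] {M : Type*} [AddCommGroup M] [Module R M] {S : Submonoid R}

noncomputable def threadFun (m : S → M) (hm : ∀ s u : S, (u : R) • m (s * u) = m s) :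
    Localization S → M := fun z =>
  Localization.liftOn z (fun r s => r • m s) (fun {a c b d} h => by
    rw [Localization.r_iff_exists] at h
    obtain ⟨e, he⟩ := h
    have h1 : a • m b = (a * ((d : R) * (e : R))) • m (b * (d * e)) := by
      rw [← hm b (d * e), Submonoid.coe_mul, ← mul_smul]
    have h2 : c • m d = (c * ((b : R) * (e : R))) • m (d * (b * e)) := by
      rw [← hm d (b * e), Submonoid.coe_mul, ← mul_smul]
    show a • m b = c • m d
    rw [h1, h2, mul_left_comm d b e, show c * ((b : R) * (e : R)) = a * ((d : R) * (e : R)) by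
      linear_combination -he])

lemma threadFun_mk (m : S → M) (hm : ∀ s u : S, (u : R) • m (s * u) = m s) (r : R) (s : S) :
    threadFun m hm (Localization.mk r s) = r • m s := rfl

noncomputable def threadToLinearMap (m : S → M) (hm : ∀ s u : S, (u : R) • m (s * u) = m s) :
    Localization S →ₗ[R] M where
  toFun := threadFun m hm
  map_add' := by
    intro x y
    refine Localization.induction_on₂ x y ?_
    rintro ⟨a, b⟩ ⟨c, d⟩
    dsimp only
    rw [Localization.add_mk, threadFun_mk, threadFun_mk, threadFun_mk]
    rw [add_smul, mul_smul, mul_smul, smul_comm ((b : R)) c, smul_comm ((d : R)) a, hm b d,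
      show (b : R) • m (b * d) = m d from by rw [mul_comm b d]; exact hm d b]
    exact add_comm _ _
  map_smul' := by
    intro r x
    refine Localization.induction_on x ?_
    rintro ⟨a, b⟩
    dsimp only
    rw [Localization.smul_mk, smul_eq_mul, threadFun_mk, threadFun_mk, mul_smul,
      RingHom.id_apply]

lemma threadToLinearMap_mk (m : S → M) (hm : ∀ s u : S, (u : R) • m (s * u) = m s) (r : R)
    (s : S) : threadToLinearMap m hm (Localization.mk r s) = r • m s := rfl

end ThreadMap
section HomConstruction
variable {R : Type*} [CommRing R] {M : Type*} [AddCommGroup M] [Module R M] {S : Submonoid R}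

lemma Submonoid.coe_mul_eq {a b c : S} (h : a * b = c) : (a : R) * (b : R) = (c : R) := by
  exact_mod_cast congrArg Subtype.val h

/-- If every element of `S` acts surjectively on the Artinian module `M`, then for every `x` there
is a linear map from the localization with value `x` at `1`. -/
theorem exists_hom_one_eq [IsArtinian R M]
    (hsurj : ∀ s : S, Function.Surjective fun v : M => (s : R) • v) (x : M) :
    ∃ f : Localization S →ₗ[R] M, f 1 = x := by
  classical
  have main := exists_thread (S := S)
    (fun s => cosetOf (if s = 1 then (⊥ : Submodule R M) else ⊤) (if s = 1 then x else 0))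
    (fun s => if s = 1 then ⊥ else ⊤) (fun s => if s = 1 then x else 0)
    (fun s => rfl) ?_
  · obtain ⟨m, hmem, hrel⟩ := main
    refine ⟨threadToLinearMap m hrel, ?_⟩
    have h1 : m 1 = x := by
      have h := hmem 1
      rw [if_pos rfl, if_pos rfl] at h
      obtain ⟨k, hk, e⟩ := h
      rw [Submodule.mem_bot] at hk
      rw [e, hk, add_zero]
    rw [← Localization.mk_one, threadToLinearMap_mk, one_smul, h1]
  · intro F
    set w : S := F.prod fun pr => pr.1 * pr.2 with hw
    obtain ⟨z, hz⟩ := hsurj (w * w) x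
    simp only at hz
    refine ⟨fun i => if h : ∃ d : S, i * d = w then ((h.choose : R) * (w : R)) • z else 0,
      fun s => ?_, fun pr hpr => ?_⟩
    · dsimp only
      by_cases hs : s = 1
      · subst hs
        have h1 : ∃ d : S, 1 * d = w := ⟨w, one_mul w⟩
        rw [dif_pos h1, if_pos rfl, if_pos rfl]
        have hcw : h1.choose = w := by have := h1.choose_spec; rwa [one_mul] at this
        refine ⟨0, Submodule.zero_mem _, ?_⟩
        rw [hcw, add_zero, ← Submonoid.coe_mul, hz]
      · rw [if_neg hs, if_neg hs]
        exact ⟨_, Submodule.mem_top, (zero_add _).symm⟩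
    · dsimp only
      have h2 : ∃ d : S, (pr.1 * pr.2) * d = w :=
        ⟨(F.erase pr).prod fun qr => qr.1 * qr.2,
          Finset.mul_prod_erase F (fun qr => qr.1 * qr.2) hpr⟩
      have h1 : ∃ d : S, pr.1 * d = w := ⟨pr.2 * h2.choose, by rw [← mul_assoc]; exact h2.choose_spec⟩
      rw [dif_pos h2, dif_pos h1, ← mul_smul]
      congr 1
      have e1 : (pr.1 : R) * (h1.choose : R) = (w : R) := Submonoid.coe_mul_eq h1.choose_spec
      have e2 : ((pr.1 * pr.2 : S) : R) * (h2.choose : R) = (w : R) :=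
        Submonoid.coe_mul_eq h2.choose_spec
      rw [Submonoid.coe_mul] at e2
      linear_combination (-((pr.2 : R) * (h2.choose : R))) * e1 + (h1.choose : R) * e2

/-- Lifting of maps out of a localization along a surjection from an Artinian module. -/
theorem exists_hom_lift [IsArtinian R M] {W : Type*} [AddCommGroup W] [Module R W]
    (π : M →ₗ[R] W) (hπ : Function.Surjective π) (f₀ : Localization S →ₗ[R] W) :
    ∃ f : Localization S →ₗ[R] M, ∀ z, π (f z) = f₀ z := by
  classical
  choose sec hsec using hπ
  have hmemX : ∀ (s : S) (v : M),
      v ∈ cosetOf (LinearMap.ker π) (sec (f₀ (Localization.mk 1 s))) ↔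
        π v = f₀ (Localization.mk 1 s) := by
    intro s v
    constructor
    · rintro ⟨k, hk, rfl⟩
      rw [map_add, hsec, LinearMap.mem_ker.mp hk, add_zero]
    · intro hv
      exact ⟨v - sec (f₀ (Localization.mk 1 s)),
        by rw [LinearMap.mem_ker, map_sub, hv, hsec, sub_self], by abel⟩
  have main := exists_thread (S := S)
    (fun s => cosetOf (LinearMap.ker π) (sec (f₀ (Localization.mk 1 s))))
    (fun _ => LinearMap.ker π) (fun s => sec (f₀ (Localization.mk 1 s)))
    (fun s => rfl) ?_
  · obtain ⟨m, hmem, hrel⟩ := main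
    refine ⟨threadToLinearMap m hrel, fun z => ?_⟩
    refine Localization.induction_on z ?_
    rintro ⟨r, s⟩
    rw [threadToLinearMap_mk, map_smul, (hmemX s (m s)).mp (hmem s), ← map_smul,
      Localization.smul_mk, smul_eq_mul, mul_one]
  · intro F
    set w : S := F.prod fun pr => pr.1 * pr.2 with hw
    set z : M := sec (f₀ (Localization.mk 1 (w * w))) with hzdef
    have hπz : π z = f₀ (Localization.mk 1 (w * w)) := hsec _
    refine ⟨fun i => if h : ∃ d : S, i * d = w then ((h.choose : R) * (w : R)) • z
      else sec (f₀ (Localization.mk 1 i)), fun s => ?_, fun pr hpr => ?_⟩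
    · dsimp only
      rw [hmemX]
      by_cases h : ∃ d : S, s * d = w
      · rw [dif_pos h, map_smul, hπz, ← map_smul]
        congr 1
        rw [Localization.smul_mk, smul_eq_mul, mul_one, Localization.mk_eq_mk_iff,
          Localization.r_iff_exists]
        refine ⟨1, ?_⟩
        have e : (s : R) * (h.choose : R) = (w : R) := Submonoid.coe_mul_eq h.choose_spec
        push_cast
        linear_combination (w : R) * e
      · rw [dif_neg h]
        exact hsec _
    · dsimp only
      have h2 : ∃ d : S, (pr.1 * pr.2) * d = w :=
        ⟨(F.erase pr).prod fun qr => qr.1 * qr.2,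
          Finset.mul_prod_erase F (fun qr => qr.1 * qr.2) hpr⟩
      have h1 : ∃ d : S, pr.1 * d = w := ⟨pr.2 * h2.choose, by rw [← mul_assoc]; exact h2.choose_spec⟩
      rw [dif_pos h2, dif_pos h1, ← mul_smul]
      congr 1
      have e1 : (pr.1 : R) * (h1.choose : R) = (w : R) := Submonoid.coe_mul_eq h1.choose_spec
      have e2 : ((pr.1 * pr.2 : S) : R) * (h2.choose : R) = (w : R) :=
        Submonoid.coe_mul_eq h2.choose_spec
      rw [Submonoid.coe_mul] at e2
      linear_combination (-((pr.2 : R) * (h2.choose : R))) * e1 + (h1.choose : R) * e2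

end HomConstruction
section Secondary
open scoped Classical
variable {R : Type*} [CommRing R] {M : Type*} [AddCommGroup M] [Module R M]

/-- `L` is a `q`-secondary submodule: nonzero, elements outside `q` act surjectively,
elements of `q` act nilpotently. -/
def IsSecondary (q : Ideal R) (L : Submodule R M) : Prop :=
  L ≠ ⊥ ∧ (∀ a : R, a ∉ q → ∀ x ∈ L, ∃ y ∈ L, a • y = x) ∧
    ∀ a : R, a ∈ q → ∃ n : ℕ, ∀ x ∈ L, a ^ n • x = 0

lemma pow_surj_of_surj {L : Submodule R M} {a : R} (h : ∀ x ∈ L, ∃ y ∈ L, a • y = x) :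
    ∀ (k : ℕ), ∀ x ∈ L, ∃ y ∈ L, a ^ k • y = x := by
  intro k
  induction k with
  | zero => exact fun x hx => ⟨x, hx, by rw [pow_zero, one_smul]⟩
  | succ n ih =>
    intro x hx
    obtain ⟨y₁, hy₁, e₁⟩ := h x hx
    obtain ⟨y₂, hy₂, e₂⟩ := ih y₁ hy₁
    exact ⟨y₂, hy₂, by rw [pow_succ, mul_comm, mul_smul, e₂, e₁]⟩

lemma IsSecondary.isPrime {q : Ideal R} {L : Submodule R M} (h : IsSecondary q L) :
    q.IsPrime := by
  obtain ⟨hbot, hsur, hnil⟩ := h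
  constructor
  · intro htop
    obtain ⟨n, hn⟩ := hnil 1 (htop ▸ Submodule.mem_top)
    refine hbot ((Submodule.eq_bot_iff L).mpr fun x hx => ?_)
    have := hn x hx
    rwa [one_pow, one_smul] at this
  · intro a b hab
    by_contra hcon
    push_neg at hcon
    obtain ⟨ha, hb⟩ := hcon
    obtain ⟨n, hn⟩ := hnil _ hab
    have hs : ∀ x ∈ L, ∃ y ∈ L, (a * b) • y = x := by
      intro x hx
      obtain ⟨y₁, hy₁, e₁⟩ := hsur a ha x hx
      obtain ⟨y₂, hy₂, e₂⟩ := hsur b hb y₁ hy₁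
      exact ⟨y₂, hy₂, by rw [mul_smul, e₂, e₁]⟩
    obtain ⟨x, hx, hxne⟩ := Submodule.ne_bot_iff L |>.mp hbot
    obtain ⟨y, hy, hxy⟩ := pow_surj_of_surj hs n x hx
    exact hxne (by rw [← hxy, hn y hy])

lemma IsSecondary.radical_annihilator {q : Ideal R} {L : Submodule R M}
    (h : IsSecondary q L) : L.annihilator.radical = q := by
  obtain ⟨hbot, hsur, hnil⟩ := h
  ext a
  constructor
  · rintro ⟨n, hn⟩
    by_contra ha
    obtain ⟨x, hx, hxne⟩ := Submodule.ne_bot_iff L |>.mp hbot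
    obtain ⟨y, hy, hxy⟩ := pow_surj_of_surj (hsur a ha) n x hx
    exact hxne (by rw [← hxy, Submodule.mem_annihilator.mp hn y hy])
  · intro ha
    obtain ⟨n, hn⟩ := hnil a ha
    exact ⟨n, Submodule.mem_annihilator.mpr hn⟩

lemma IsSecondary.map_linear {W : Type*} [AddCommGroup W] [Module R W] {q : Ideal R}
    {L : Submodule R M} (h : IsSecondary q L) (φ : M →ₗ[R] W) (hne : L.map φ ≠ ⊥) :
    IsSecondary q (L.map φ) := by
  obtain ⟨-, hsur, hnil⟩ := h
  refine ⟨hne, ?_, ?_⟩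
  · rintro a ha _ ⟨x, hx, rfl⟩
    obtain ⟨y, hy, e⟩ := hsur a ha x hx
    exact ⟨φ y, ⟨y, hy, rfl⟩, by rw [← map_smul, e]⟩
  · intro a ha
    obtain ⟨n, hn⟩ := hnil a ha
    refine ⟨n, ?_⟩
    rintro _ ⟨x, hx, rfl⟩
    rw [← map_smul, hn x hx, map_zero]

/-- Every submodule of an Artinian module has a secondary representation. -/
theorem exists_secondary_rep [IsArtinian R M] (N : Submodule R M) :
    ∃ ℓ : List (Ideal R × Submodule R M),
      (ℓ.map Prod.snd).foldr (· ⊔ ·) ⊥ = N ∧ ∀ pr ∈ ℓ, IsSecondary pr.1 pr.2 := by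
  by_contra hN
  obtain ⟨N₀, hN₀, hmin⟩ := IsArtinian.set_has_minimal (R := R) (M := M)
    {P | ¬ ∃ ℓ : List (Ideal R × Submodule R M),
      (ℓ.map Prod.snd).foldr (· ⊔ ·) ⊥ = P ∧ ∀ pr ∈ ℓ, IsSecondary pr.1 pr.2} ⟨N, hN⟩
  have hbot : N₀ ≠ ⊥ := by
    intro h
    exact hN₀ ⟨[], by simp [h], by simp⟩
  by_cases hirr : ∃ A B : Submodule R M, A < N₀ ∧ B < N₀ ∧ A ⊔ B = N₀
  · obtain ⟨A, B, hA, hB, hAB⟩ := hirr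
    have hRepA : ∃ ℓ : List (Ideal R × Submodule R M),
        (ℓ.map Prod.snd).foldr (· ⊔ ·) ⊥ = A ∧ ∀ pr ∈ ℓ, IsSecondary pr.1 pr.2 := by
      by_contra h; exact hmin A h hA
    have hRepB : ∃ ℓ : List (Ideal R × Submodule R M),
        (ℓ.map Prod.snd).foldr (· ⊔ ·) ⊥ = B ∧ ∀ pr ∈ ℓ, IsSecondary pr.1 pr.2 := by
      by_contra h; exact hmin B h hB
    obtain ⟨ℓA, hℓA, hsA⟩ := hRepA
    obtain ⟨ℓB, hℓB, hsB⟩ := hRepB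
    refine hN₀ ⟨ℓA ++ ℓB, ?_, ?_⟩
    · have : ∀ (l1 l2 : List (Submodule R M)),
          (l1 ++ l2).foldr (· ⊔ ·) ⊥ = l1.foldr (· ⊔ ·) ⊥ ⊔ l2.foldr (· ⊔ ·) ⊥ := by
        intro l1 l2
        induction l1 with
        | nil => simp
        | cons a t ih => simp only [List.cons_append, List.foldr_cons, ih, sup_assoc]
      rw [List.map_append, this, hℓA, hℓB, hAB]
    · intro pr hpr
      rcases List.mem_append.mp hpr with h | h
      · exact hsA pr h
      · exact hsB pr h
  · push_neg at hirr
    have hdich : ∀ a : R, (∀ x ∈ N₀, ∃ y ∈ N₀, a • y = x) ∨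
        (∃ n : ℕ, ∀ x ∈ N₀, a ^ n • x = 0) := by
      intro a
      obtain ⟨K, ⟨n, hK⟩, hKmin⟩ := IsArtinian.set_has_minimal (R := R) (M := M)
        {P | ∃ n : ℕ, P = N₀.map (LinearMap.lsmul R M (a ^ n))}
        ⟨N₀.map (LinearMap.lsmul R M (a ^ 0)), 0, rfl⟩
      have hdec : ∀ i j : ℕ, i ≤ j →
          N₀.map (LinearMap.lsmul R M (a ^ j)) ≤ N₀.map (LinearMap.lsmul R M (a ^ i)) := by
        intro i j hij
        rintro _ ⟨x, hx, rfl⟩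
        refine ⟨a ^ (j - i) • x, N₀.smul_mem _ hx, ?_⟩
        simp only [LinearMap.lsmul_apply]
        rw [← mul_smul, ← pow_add, Nat.add_sub_cancel' hij]
      have hall : ∀ m : ℕ, N₀.map (LinearMap.lsmul R M (a ^ (n + m))) = K := by
        intro m
        have h2 : N₀.map (LinearMap.lsmul R M (a ^ (n + m))) ≤ K :=
          hK ▸ hdec n (n + m) (Nat.le_add_right n m)
        have h1 := hKmin (N₀.map (LinearMap.lsmul R M (a ^ (n + m)))) ⟨n + m, rfl⟩
        exact (lt_or_eq_of_le h2).resolve_left h1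
      have hKN : K ≤ N₀ := by
        rw [hK]
        rintro _ ⟨x, hx, rfl⟩
        exact N₀.smul_mem _ hx
      have hsup : K ⊔ (N₀ ⊓ LinearMap.ker (LinearMap.lsmul R M (a ^ n))) = N₀ := by
        apply le_antisymm
        · exact sup_le hKN inf_le_left
        · intro x hx
          have hmem : a ^ n • x ∈ N₀.map (LinearMap.lsmul R M (a ^ (n + n))) := by
            rw [hall n, hK]
            exact ⟨x, hx, rfl⟩
          obtain ⟨y, hy, hxy⟩ := hmem
          simp only [LinearMap.lsmul_apply] at hxy
          have hx1 : a ^ n • y ∈ K := by rw [hK]; exact ⟨y, hy, rfl⟩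
          have hx2 : x - a ^ n • y ∈ N₀ ⊓ LinearMap.ker (LinearMap.lsmul R M (a ^ n)) := by
            rw [Submodule.mem_inf]
            refine ⟨N₀.sub_mem hx (N₀.smul_mem _ hy), ?_⟩
            rw [LinearMap.mem_ker, LinearMap.lsmul_apply, smul_sub, ← hxy, ← mul_smul,
              ← pow_add, sub_self]
          have : x = a ^ n • y + (x - a ^ n • y) := by abel
          rw [this]
          exact Submodule.add_mem _ (Submodule.mem_sup_left hx1) (Submodule.mem_sup_right hx2)
      have hcase : K = N₀ ∨ (N₀ ⊓ LinearMap.ker (LinearMap.lsmul R M (a ^ n))) = N₀ := by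
        by_contra hc
        push_neg at hc
        exact hirr K _ (lt_of_le_of_ne hKN hc.1) (lt_of_le_of_ne inf_le_left hc.2) hsup
      rcases hcase with h | h
      · left
        intro x hx
        have : x ∈ N₀.map (LinearMap.lsmul R M (a ^ (n + 1))) := by
          rw [hall 1, h]; exact hx
        have hle := hdec 1 (n + 1) (by omega)
        obtain ⟨y, hy, hxy⟩ := hle this
        simp only [LinearMap.lsmul_apply, pow_one] at hxy
        exact ⟨y, hy, hxy⟩
      · right
        refine ⟨n, fun x hx => ?_⟩
        have hx' : x ∈ N₀ ⊓ LinearMap.ker (LinearMap.lsmul R M (a ^ n)) := by rw [h]; exact hx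
        have h2 := (Submodule.mem_inf.mp hx').2
        rwa [LinearMap.mem_ker, LinearMap.lsmul_apply] at h2
    have hsec : IsSecondary (N₀.annihilator.radical) N₀ := by
      refine ⟨hbot, ?_, ?_⟩
      · intro a ha
        rcases hdich a with h | h
        · exact h
        · exfalso
          obtain ⟨n, hn⟩ := h
          exact ha ⟨n, Submodule.mem_annihilator.mpr hn⟩
      · intro a ha
        obtain ⟨n, hn⟩ := ha
        exact ⟨n, Submodule.mem_annihilator.mp hn⟩
    exact hN₀ ⟨[(N₀.annihilator.radical, N₀)], by simp, by simp [hsec]⟩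

/-- Extract an irredundant subrepresentation. -/
theorem irredundant_refine :
    ∀ (n : ℕ) (ℓ : List (Ideal R × Submodule R M)), ℓ.length ≤ n →
      ∃ ℓ' : List (Ideal R × Submodule R M), (∀ pr ∈ ℓ', pr ∈ ℓ) ∧
        (ℓ'.map Prod.snd).foldr (· ⊔ ·) ⊥ = (ℓ.map Prod.snd).foldr (· ⊔ ·) ⊥ ∧
        ∀ pr ∈ ℓ', ((ℓ'.erase pr).map Prod.snd).foldr (· ⊔ ·) ⊥ ≠
          (ℓ'.map Prod.snd).foldr (· ⊔ ·) ⊥ := by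
  intro n
  induction n with
  | zero =>
    intro ℓ hℓ
    have : ℓ = [] := List.length_eq_zero_iff.mp (Nat.le_zero.mp hℓ)
    subst this
    exact ⟨[], by simp, rfl, by simp⟩
  | succ n ih =>
    intro ℓ hℓ
    by_cases h : ∃ pr ∈ ℓ, ((ℓ.erase pr).map Prod.snd).foldr (· ⊔ ·) ⊥ =
        (ℓ.map Prod.snd).foldr (· ⊔ ·) ⊥
    · obtain ⟨pr, hpr, heq⟩ := h
      have hlen : (ℓ.erase pr).length ≤ n := by
        rw [List.length_erase_of_mem hpr]
        omega
      obtain ⟨ℓ', h1, h2, h3⟩ := ih (ℓ.erase pr) hlen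
      exact ⟨ℓ', fun qr hqr => List.mem_of_mem_erase (h1 qr hqr), by rw [h2, heq], h3⟩
    · push_neg at h
      exact ⟨ℓ, fun pr hpr => hpr, rfl, h⟩

/-- sup over a list erase. -/
lemma foldr_sup_erase {ℓ : List (Ideal R × Submodule R M)} {pr : Ideal R × Submodule R M}
    (hpr : pr ∈ ℓ) :
    (ℓ.map Prod.snd).foldr (· ⊔ ·) ⊥ =
      pr.2 ⊔ ((ℓ.erase pr).map Prod.snd).foldr (· ⊔ ·) ⊥ := by
  classical
  induction ℓ with
  | nil => cases hpr
  | cons a t ih =>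
    by_cases hh : pr = a
    · subst hh
      rw [List.erase_cons_head, List.map_cons, List.foldr_cons]
    · have hmem : pr ∈ t := by
        rcases List.mem_cons.mp hpr with h | h
        · exact absurd h hh
        · exact h
      have hne : ¬(a == pr) := by
        simp only [beq_iff_eq]
        exact fun h => hh h.symm
      rw [List.erase_cons_tail hne, List.map_cons, List.foldr_cons, List.map_cons,
        List.foldr_cons, ih hmem, sup_left_comm]

lemma prod_annihilator_le (ℓ : List (Submodule R M)) :
    (ℓ.map Submodule.annihilator).prod ≤ (ℓ.foldr (· ⊔ ·) ⊥).annihilator := by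
  induction ℓ with
  | nil => simp [Submodule.annihilator_bot]
  | cons a t ih =>
    rw [List.map_cons, List.prod_cons, List.foldr_cons]
    refine Ideal.mul_le.mpr fun r hr s hs => ?_
    rw [Submodule.mem_annihilator]
    intro x hx
    obtain ⟨u, hu, v, hv, rfl⟩ := Submodule.mem_sup.mp hx
    have h1 : (r * s) • u = 0 := by
      rw [mul_comm, mul_smul, Submodule.mem_annihilator.mp hr u hu, smul_zero]
    have h2 : (r * s) • v = 0 := by
      rw [mul_smul, Submodule.mem_annihilator.mp (ih hs) v hv, smul_zero]
    rw [smul_add, h1, h2, add_zero]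

lemma exists_mem_le_of_prod_le {P : Ideal R} (hP : P.IsPrime) (l : List (Ideal R))
    (h : l.prod ≤ P) : ∃ I ∈ l, I ≤ P := by
  induction l with
  | nil =>
    exfalso
    apply hP.ne_top
    rw [List.prod_nil, Ideal.one_eq_top] at h
    exact top_le_iff.mp h
  | cons a t ih =>
    rw [List.prod_cons] at h
    rcases hP.mul_le.mp h with h | h
    · exact ⟨a, List.mem_cons_self, h⟩
    · obtain ⟨I, hI, hle⟩ := ih h
      exact ⟨I, List.mem_cons_of_mem _ hI, hle⟩

end Secondary
section LocalizationFacts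
variable {R : Type*} [CommRing R] (p : Ideal R) [hp : p.IsPrime]

lemma mk_mem_map_iff {q : Ideal R} (hq : q.IsPrime) (hqp : q ≤ p) (a : R) (s : p.primeCompl) :
    Localization.mk a s ∈ q.map (algebraMap R (Localization.AtPrime p)) ↔ a ∈ q := by
  constructor
  · intro h
    obtain ⟨⟨x, t⟩, he⟩ := (IsLocalization.mem_map_algebraMap_iff p.primeCompl _).mp h
    simp only [← Localization.mk_one_eq_algebraMap] at he
    rw [Localization.mk_mul, Localization.mk_eq_mk_iff, Localization.r_iff_exists] at he
    obtain ⟨c, hc⟩ := he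
    push_cast at hc
    -- hc : ↑c * (1 * (a * ↑t)) = ↑c * (↑s * 1 * ↑x)
    have hmem : (c : R) * (a * (t : R)) ∈ q := by
      have : (c : R) * (1 * (a * (t : R))) ∈ q := by
        rw [hc]
        exact q.mul_mem_left _ (q.mul_mem_left _ x.2)
      rwa [one_mul] at this
    have hc' : (c : R) ∉ q := fun hh => c.2 (hqp hh)
    have ht' : (t : R) ∉ q := fun hh => t.2 (hqp hh)
    rcases hq.mem_or_mem hmem with h | h
    · exact absurd h hc'
    · rcases hq.mem_or_mem h with h | h
      · exact h
      · exact absurd h ht'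
  · intro h
    have : Localization.mk a s = Localization.mk 1 s * algebraMap R (Localization.AtPrime p) a := by
      rw [← Localization.mk_one_eq_algebraMap, Localization.mk_mul, one_mul, mul_one]
    rw [this]
    exact Ideal.mul_mem_left _ _ (Ideal.mem_map_of_mem _ h)

lemma map_isPrime_of_le {q : Ideal R} (hq : q.IsPrime) (hqp : q ≤ p) :
    (q.map (algebraMap R (Localization.AtPrime p))).IsPrime := by
  refine IsLocalization.isPrime_of_isPrime_disjoint p.primeCompl _ q hq ?_
  rw [Set.disjoint_left]
  intro x hx hxq
  exact hx (hqp hxq)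

end LocalizationFacts

section Coloc
variable {R : Type*} [CommRing R] {M : Type*} [AddCommGroup M] [Module R M]
variable (p : Ideal R) [hp : p.IsPrime]

lemma coloc_smul_apply (α : Localization.AtPrime p) (f : Localization.AtPrime p →ₗ[R] M)
    (y : Localization.AtPrime p) : (α • f) y = f (α * y) := rfl

/-- The `R_p`-submodule of the co-localization consisting of maps with values in `A`. -/
def Hsub (A : Submodule R M) :
    Submodule (Localization.AtPrime p) (Localization.AtPrime p →ₗ[R] M) where
  carrier := {f | ∀ y, f y ∈ A}
  add_mem' := fun hf hg y => A.add_mem (hf y) (hg y)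
  zero_mem' := fun _ => A.zero_mem
  smul_mem' := fun α f hf y => hf (α * y)

lemma mem_Hsub {A : Submodule R M} {f : Localization.AtPrime p →ₗ[R] M} :
    f ∈ Hsub p A ↔ ∀ y, f y ∈ A := Iff.rfl

/-- Direction `⊇` of the main theorem. -/
theorem isAttached_map_of_isAttached [IsArtinian R M]
    {q : Ideal R} (hq : IsAttachedPrime R M q) (hqp : q ≤ p) :
    IsAttachedPrime (Localization.AtPrime p) (Localization.AtPrime p →ₗ[R] M)
      (q.map (algebraMap R (Localization.AtPrime p))) := by
  obtain ⟨hqprime, N, hN⟩ := hq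
  refine ⟨map_isPrime_of_le p hqprime hqp, Hsub p N, ?_⟩
  apply le_antisymm
  · -- annihilator ≤ map q
    intro α hα
    revert hα
    refine Localization.induction_on α ?_
    rintro ⟨a, s⟩ hα
    rw [mk_mem_map_iff p hqprime hqp]
    by_contra ha
    obtain ⟨ℓ, hsup, hsec⟩ := exists_secondary_rep (R := R) (M := M) ⊤
    -- pass to images in M ⧸ N and find a q-secondary nonzero one
    have hmapfold : ∀ l : List (Submodule R M),
        ((l.map (Submodule.map N.mkQ)).foldr (· ⊔ ·) ⊥) =
          (l.foldr (· ⊔ ·) ⊥).map N.mkQ := by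
      intro l
      induction l with
      | nil => simp
      | cons b t ih => simp [Submodule.map_sup, ih]
    have hprod : ((ℓ.map fun pr => (pr.2.map N.mkQ).annihilator).prod) ≤ q := by
      have h1 := prod_annihilator_le (ℓ.map fun pr => pr.2.map N.mkQ)
      have h2 : ((ℓ.map fun pr => pr.2.map N.mkQ).foldr (· ⊔ ·) ⊥) = ⊤ := by
        have : (ℓ.map fun pr => pr.2.map N.mkQ) =
            ((ℓ.map Prod.snd).map (Submodule.map N.mkQ)) := by
          rw [List.map_map]; rfl
        rw [this, hmapfold, hsup, Submodule.map_top, Submodule.range_mkQ]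
      rw [h2, Submodule.annihilator_top, hN] at h1
      have h3 : ((ℓ.map fun pr => pr.2.map N.mkQ).map Submodule.annihilator) =
          (ℓ.map fun pr => (pr.2.map N.mkQ).annihilator) := by
        rw [List.map_map]; rfl
      rwa [h3] at h1
    obtain ⟨I, hIl, hIq⟩ := exists_mem_le_of_prod_le hqprime _ hprod
    obtain ⟨pr, hprl, rfl⟩ := List.mem_map.mp hIl
    have hKbot : pr.2.map N.mkQ ≠ ⊥ := by
      intro h
      rw [h, Submodule.annihilator_bot] at hIq
      exact hqprime.ne_top (top_le_iff.mp hIq)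
    have hKsec : IsSecondary pr.1 (pr.2.map N.mkQ) := (hsec pr hprl).map_linear N.mkQ hKbot
    have hq2 : pr.1 = q := by
      have h1 : (pr.2.map N.mkQ).annihilator.radical = pr.1 := hKsec.radical_annihilator
      have h2 : q ≤ (pr.2.map N.mkQ).annihilator := by
        intro b hb
        rw [Submodule.mem_annihilator]
        intro z _
        have hb' : b ∈ Module.annihilator R (M ⧸ N) := by rw [hN]; exact hb
        exact Module.mem_annihilator.mp hb' z
      refine le_antisymm ?_ ?_
      · rw [← h1]
        calc (pr.2.map N.mkQ).annihilator.radical ≤ q.radical := Ideal.radical_mono hIq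
        _ = q := hqprime.radical
      · rw [← h1]
        exact le_trans h2 Ideal.le_radical
    have hx : ∃ x ∈ pr.2.map N.mkQ, a • x ≠ 0 := by
      by_contra hc
      push_neg at hc
      obtain ⟨x, hxK, hxne⟩ := (Submodule.ne_bot_iff _).mp hKbot
      obtain ⟨y, hyK, hyx⟩ := hKsec.2.1 a (by rw [hq2]; exact ha) x hxK
      exact hxne (by rw [← hyx, hc y hyK])
    obtain ⟨x, hxK, hax⟩ := hx
    have hsurj : ∀ s' : p.primeCompl,
        Function.Surjective fun v : ↥(pr.2.map N.mkQ) => (s' : R) • v := by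
      intro s'
      rintro ⟨z, hz⟩
      have hs'q : (s' : R) ∉ pr.1 := by rw [hq2]; exact fun h => s'.2 (hqp h)
      obtain ⟨y, hy, he⟩ := hKsec.2.1 (s' : R) hs'q z hz
      exact ⟨⟨y, hy⟩, Subtype.ext he⟩
    obtain ⟨g, hg1⟩ := exists_hom_one_eq (M := ↥(pr.2.map N.mkQ)) (S := p.primeCompl) hsurj ⟨x, hxK⟩
    obtain ⟨f, hf⟩ := exists_hom_lift (S := p.primeCompl) N.mkQ
      (Submodule.Quotient.mk_surjective N) ((pr.2.map N.mkQ).subtype ∘ₗ g)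
    have hmem : Localization.mk a s • f ∈ Hsub p N := by
      have h0 := Module.mem_annihilator.mp hα (Submodule.Quotient.mk f)
      rwa [← Submodule.Quotient.mk_smul, Submodule.Quotient.mk_eq_zero] at h0
    have hcontra := hmem (algebraMap R (Localization.AtPrime p) (s : R))
    rw [coloc_smul_apply] at hcontra
    have he1 : Localization.mk a s * algebraMap R (Localization.AtPrime p) (s : R) =
        algebraMap R (Localization.AtPrime p) a := by
      simp only [← Localization.mk_one_eq_algebraMap]
      rw [Localization.mk_mul, Localization.mk_eq_mk_iff, Localization.r_iff_exists]
      refine ⟨1, ?_⟩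
      push_cast
      ring
    rw [he1] at hcontra
    have hfa : N.mkQ (f (algebraMap R (Localization.AtPrime p) a)) =
        (pr.2.map N.mkQ).subtype (g (algebraMap R (Localization.AtPrime p) a)) := hf _
    have hga : g (algebraMap R (Localization.AtPrime p) a) = a • g 1 := by
      have hh : algebraMap R (Localization.AtPrime p) a = a • (1 : Localization.AtPrime p) := by
        rw [Algebra.smul_def, mul_one]
      rw [hh, map_smul]
    have hne : N.mkQ (f (algebraMap R (Localization.AtPrime p) a)) ≠ 0 := by
      rw [hfa, hga, hg1, map_smul]
      exact hax
    apply hne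
    rw [Submodule.mkQ_apply, Submodule.Quotient.mk_eq_zero]
    exact hcontra
  · -- map q ≤ annihilator
    rw [Ideal.map_le_iff_le_comap]
    intro a ha
    rw [Ideal.mem_comap, Module.mem_annihilator]
    intro z
    obtain ⟨f, rfl⟩ := Submodule.Quotient.mk_surjective _ z
    rw [← Submodule.Quotient.mk_smul, Submodule.Quotient.mk_eq_zero]
    intro y
    rw [coloc_smul_apply]
    have hh : algebraMap R (Localization.AtPrime p) a * y = a • y := (Algebra.smul_def a y).symm
    rw [hh, map_smul]
    have ha' : a ∈ Module.annihilator R (M ⧸ N) := by rw [hN]; exact ha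
    have hb := Module.mem_annihilator.mp ha' (N.mkQ (f y))
    rwa [← map_smul, Submodule.mkQ_apply, Submodule.Quotient.mk_eq_zero] at hb

end Coloc
section Main
variable {R : Type*} [CommRing R] {M : Type*} [AddCommGroup M] [Module R M]
variable (p : Ideal R) [hp : p.IsPrime]

lemma foldr_sup_map {W : Type*} [AddCommGroup W] [Module R W] (φ : M →ₗ[R] W)
    (l : List (Submodule R M)) :
    (l.map (Submodule.map φ)).foldr (· ⊔ ·) ⊥ = (l.foldr (· ⊔ ·) ⊥).map φ := by
  induction l with
  | nil => simp
  | cons b t ih => simp [Submodule.map_sup, ih]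

lemma hom_mem_foldr_Hsub [IsArtinian R M] :
    ∀ (l : List (Submodule R M)) (f : Localization.AtPrime p →ₗ[R] M),
      (∀ y, f y ∈ l.foldr (· ⊔ ·) ⊥) →
      f ∈ ((l.map fun A => Hsub p A).foldr (· ⊔ ·)
        (⊥ : Submodule (Localization.AtPrime p) (Localization.AtPrime p →ₗ[R] M))) := by
  intro l
  induction l with
  | nil =>
    intro f hf
    simp only [List.map_nil, List.foldr_nil, Submodule.mem_bot]
    apply LinearMap.ext
    intro y
    have := hf y
    rwa [List.foldr_nil, Submodule.mem_bot] at this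
  | cons A t ih =>
    intro f hf
    set B := t.foldr (· ⊔ ·) ⊥ with hB
    have hf' : ∀ y, f y ∈ A ⊔ B := hf
    set π : (↥A × ↥B) →ₗ[R] M :=
      A.subtype.comp (LinearMap.fst R ↥A ↥B) + B.subtype.comp (LinearMap.snd R ↥A ↥B) with hπ
    have hπmem : ∀ w : ↥A × ↥B, π w ∈ A ⊔ B := by
      intro w
      exact Submodule.add_mem _ (Submodule.mem_sup_left w.1.2) (Submodule.mem_sup_right w.2.2)
    set π' : (↥A × ↥B) →ₗ[R] ↥(A ⊔ B) := LinearMap.codRestrict (A ⊔ B) π hπmem with hπ'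
    have hsurj : Function.Surjective π' := by
      rintro ⟨z, hz⟩
      obtain ⟨u, hu, v, hv, huv⟩ := Submodule.mem_sup.mp hz
      refine ⟨(⟨u, hu⟩, ⟨v, hv⟩), ?_⟩
      apply Subtype.ext
      simp only [hπ', LinearMap.codRestrict_apply]
      simp only [hπ, LinearMap.add_apply, LinearMap.comp_apply, LinearMap.fst_apply,
        LinearMap.snd_apply, Submodule.coe_subtype]
      exact huv
    obtain ⟨g, hg⟩ := exists_hom_lift (S := p.primeCompl) π' hsurj
      (LinearMap.codRestrict (A ⊔ B) f hf')
    set f1 : Localization.AtPrime p →ₗ[R] M :=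
      A.subtype ∘ₗ (LinearMap.fst R ↥A ↥B) ∘ₗ g with hf1
    set f2 : Localization.AtPrime p →ₗ[R] M :=
      B.subtype ∘ₗ (LinearMap.snd R ↥A ↥B) ∘ₗ g with hf2
    have hsum : f = f1 + f2 := by
      apply LinearMap.ext
      intro y
      have h1 := congrArg Subtype.val (hg y)
      simp only [LinearMap.codRestrict_apply] at h1
      rw [LinearMap.add_apply]
      rw [← h1]
      rfl
    have hm1 : f1 ∈ Hsub p A := fun y => (((LinearMap.fst R ↥A ↥B) ∘ₗ g) y).2
    have hm2 : ∀ y, f2 y ∈ B := fun y => (((LinearMap.snd R ↥A ↥B) ∘ₗ g) y).2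
    rw [hsum, List.map_cons, List.foldr_cons]
    exact Submodule.add_mem _ (Submodule.mem_sup_left hm1)
      (Submodule.mem_sup_right (ih f2 hm2))

/-- Direction `⊆` of the main theorem. -/
theorem exists_attached_of_attached_coloc [IsNoetherianRing R] [IsArtinian R M]
    {P : Ideal (Localization.AtPrime p)}
    (hP : IsAttachedPrime (Localization.AtPrime p) (Localization.AtPrime p →ₗ[R] M) P) :
    ∃ q : Ideal R, IsAttachedPrime R M q ∧ q ≤ p ∧
      P = q.map (algebraMap R (Localization.AtPrime p)) := by
  classical
  obtain ⟨hPp, N', hN'⟩ := hP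
  obtain ⟨ℓ₀, hsup₀, hsec₀⟩ := exists_secondary_rep (R := R) (M := M) ⊤
  obtain ⟨ℓ, hmemℓ, hsupeq, hirr⟩ := irredundant_refine ℓ₀.length ℓ₀ le_rfl
  have hsup : (ℓ.map Prod.snd).foldr (· ⊔ ·) ⊥ = ⊤ := by rw [hsupeq, hsup₀]
  have hsec : ∀ pr ∈ ℓ, IsSecondary pr.1 pr.2 := fun pr h => hsec₀ pr (hmemℓ pr h)
  -- every hom lies in the sup of the Hsub's
  have hH : ∀ f : Localization.AtPrime p →ₗ[R] M,
      f ∈ (((ℓ.map Prod.snd).map fun A => Hsub p A).foldr (· ⊔ ·) ⊥) := by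
    intro f
    refine hom_mem_foldr_Hsub p (ℓ.map Prod.snd) f ?_
    rw [hsup]
    exact fun y => Submodule.mem_top
  have hfoldtop : (((ℓ.map Prod.snd).map fun A => Hsub p A).foldr (· ⊔ ·) ⊥) = ⊤ := by
    rw [eq_top_iff]
    exact fun f _ => hH f
  -- the images in the quotient
  have hKlist : ((((ℓ.map Prod.snd).map fun A => Hsub p A).map (Submodule.map N'.mkQ)) :
      List (Submodule (Localization.AtPrime p) _)) =
        ℓ.map fun pr => (Hsub p pr.2).map N'.mkQ := by
    rw [List.map_map, List.map_map]; rfl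
  have htop : ((ℓ.map fun pr => (Hsub p pr.2).map N'.mkQ).foldr (· ⊔ ·) ⊥) = ⊤ := by
    rw [← hKlist, foldr_sup_map, hfoldtop, Submodule.map_top, Submodule.range_mkQ]
  have hprod : ((ℓ.map fun pr => ((Hsub p pr.2).map N'.mkQ).annihilator).prod) ≤ P := by
    have h1 := prod_annihilator_le (ℓ.map fun pr => (Hsub p pr.2).map N'.mkQ)
    rw [htop, Submodule.annihilator_top, hN'] at h1
    have h3 : ((ℓ.map fun pr => (Hsub p pr.2).map N'.mkQ).map Submodule.annihilator) =
        ℓ.map fun pr => ((Hsub p pr.2).map N'.mkQ).annihilator := by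
      rw [List.map_map]; rfl
    rwa [h3] at h1
  obtain ⟨I, hIl, hIP⟩ := exists_mem_le_of_prod_le hPp _ hprod
  obtain ⟨pr, hprl, rfl⟩ := List.mem_map.mp hIl
  have hPley : P ≤ ((Hsub p pr.2).map N'.mkQ).annihilator := by
    intro b hb
    have hb' : b ∈ Module.annihilator (Localization.AtPrime p)
        ((Localization.AtPrime p →ₗ[R] M) ⧸ N') := by rw [hN']; exact hb
    rw [Submodule.mem_annihilator]
    intro z _
    exact Module.mem_annihilator.mp hb' z
  have hPeq : P = ((Hsub p pr.2).map N'.mkQ).annihilator := le_antisymm hPley hIP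
  have hKbarbot : (Hsub p pr.2).map N'.mkQ ≠ ⊥ := by
    intro h
    rw [h, Submodule.annihilator_bot] at hPeq
    exact hPp.ne_top hPeq
  have hsecpr := hsec pr hprl
  have hprime : pr.1.IsPrime := hsecpr.isPrime
  -- q ≤ p
  have hqp : pr.1 ≤ p := by
    by_contra hc
    obtain ⟨t, htq, htp⟩ := SetLike.not_le_iff_exists.mp hc
    obtain ⟨n, hn⟩ := hsecpr.2.2 t htq
    have htp' : t ∈ p.primeCompl := htp
    have hzero : Hsub p pr.2 = ⊥ := by
      rw [eq_bot_iff]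
      intro f hf
      rw [Submodule.mem_bot]
      apply LinearMap.ext
      intro y
      have hunit : algebraMap R (Localization.AtPrime p) t * Localization.mk 1 ⟨t, htp'⟩ = 1 := by
        rw [← Localization.mk_one_eq_algebraMap, Localization.mk_mul, mul_one, one_mul]
        exact Localization.mk_self (⟨t, htp'⟩ : p.primeCompl)
      have hcalc : f y = (t ^ n) • f ((Localization.mk 1 ⟨t, htp'⟩) ^ n * y) := by
        conv_lhs => rw [show y = (algebraMap R (Localization.AtPrime p) t *
          Localization.mk 1 ⟨t, htp'⟩) ^ n * y by rw [hunit, one_pow, one_mul]]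
        rw [mul_pow, ← map_pow, mul_assoc, ← Algebra.smul_def, map_smul]
      rw [hcalc, hn _ (hf _)]
      simp
    exact hKbarbot (by rw [hzero, Submodule.map_bot])
  -- P = map pr.1
  have hPmap : P = pr.1.map (algebraMap R (Localization.AtPrime p)) := by
    apply le_antisymm
    · intro α hα
      revert hα
      refine Localization.induction_on α ?_
      rintro ⟨a, s⟩ hα
      rw [mk_mem_map_iff p hprime hqp]
      by_contra ha
      have hstep : ∀ f ∈ Hsub p pr.2, ∃ g ∈ Hsub p pr.2,
          algebraMap R (Localization.AtPrime p) a • g = f := by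
        intro f hf
        have hπa : Function.Surjective (LinearMap.lsmul R ↥pr.2 a) := by
          rintro ⟨z, hz⟩
          obtain ⟨y, hy, he⟩ := hsecpr.2.1 a ha z hz
          exact ⟨⟨y, hy⟩, Subtype.ext he⟩
        obtain ⟨g', hg'⟩ := exists_hom_lift (S := p.primeCompl) (LinearMap.lsmul R ↥pr.2 a) hπa
          (LinearMap.codRestrict pr.2 f hf)
        refine ⟨pr.2.subtype ∘ₗ g', fun y => (g' y).2, ?_⟩
        apply LinearMap.ext
        intro y
        rw [coloc_smul_apply]
        have h1 : algebraMap R (Localization.AtPrime p) a * y = a • y := (Algebra.smul_def a y).symm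
        rw [h1, map_smul]
        have h4 := congrArg (pr.2.subtype) (hg' y)
        simp only [LinearMap.lsmul_apply, map_smul, LinearMap.codRestrict_apply] at h4
        have h5 : ((LinearMap.codRestrict pr.2 f hf) y : M) = f y := rfl
        simpa [LinearMap.comp_apply, h5] using h4
      have haP : algebraMap R (Localization.AtPrime p) a ∈ P := by
        have he2 : Localization.mk (s : R) 1 * Localization.mk a s =
            algebraMap R (Localization.AtPrime p) a := by
          rw [Localization.mk_mul, ← Localization.mk_one_eq_algebraMap,
            Localization.mk_eq_mk_iff, Localization.r_iff_exists]
          refine ⟨1, ?_⟩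
          push_cast
          ring
        have := P.mul_mem_left (Localization.mk (s : R) 1) hα
        rwa [he2] at this
      apply hKbarbot
      rw [Submodule.eq_bot_iff]
      rintro z hz
      obtain ⟨f, hf, rfl⟩ := Submodule.mem_map.mp hz
      obtain ⟨g, hg, he⟩ := hstep f hf
      have h0 : algebraMap R (Localization.AtPrime p) a • (N'.mkQ g) = 0 := by
        have hmem2 : N'.mkQ g ∈ (Hsub p pr.2).map N'.mkQ := ⟨g, hg, rfl⟩
        exact Submodule.mem_annihilator.mp (hPeq ▸ haP) _ hmem2
      rw [← he, map_smul, h0]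
    · rw [Ideal.map_le_iff_le_comap]
      intro a ha
      rw [Ideal.mem_comap]
      obtain ⟨n, hn⟩ := hsecpr.2.2 a ha
      have hpow : (algebraMap R (Localization.AtPrime p) a) ^ n ∈
          ((Hsub p pr.2).map N'.mkQ).annihilator := by
        rw [Submodule.mem_annihilator]
        rintro z hz
        obtain ⟨f, hf, rfl⟩ := Submodule.mem_map.mp hz
        rw [← map_smul]
        have hzero : (algebraMap R (Localization.AtPrime p) a) ^ n • f = 0 := by
          apply LinearMap.ext
          intro y
          rw [coloc_smul_apply, ← map_pow, LinearMap.zero_apply]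
          have h1 : algebraMap R (Localization.AtPrime p) (a ^ n) * y = (a ^ n) • y :=
            (Algebra.smul_def _ y).symm
          rw [h1, map_smul, hn _ (hf y)]
        rw [hzero, map_zero]
      have hrad : algebraMap R (Localization.AtPrime p) a ∈ P.radical := ⟨n, hPeq ▸ hpow⟩
      rwa [hPp.radical] at hrad
  -- attachedness of pr.1
  have hq_att : IsAttachedPrime R M pr.1 := by
    refine ⟨hprime, ?_⟩
    set N₀ := ((ℓ.erase pr).map Prod.snd).foldr (· ⊔ ·) ⊥ with hN₀
    have hN₀top : N₀ ≠ ⊤ := by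
      intro h
      exact hirr pr hprl (by rw [← hN₀, h, hsup])
    have hquotbot : ((⊤ : Submodule R (M ⧸ N₀)) = ⊥) → N₀ = ⊤ := by
      intro h
      rw [eq_top_iff]
      intro x _
      have hx : N₀.mkQ x ∈ (⊥ : Submodule R (M ⧸ N₀)) := by rw [← h]; trivial
      rw [Submodule.mem_bot] at hx
      rwa [Submodule.mkQ_apply, Submodule.Quotient.mk_eq_zero] at hx
    have hsup2 : pr.2 ⊔ N₀ = ⊤ := by rw [← foldr_sup_erase hprl, hsup]
    refine ⟨N₀ ⊔ (pr.1 • ⊤ : Submodule R M), ?_⟩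
    have hmapT : pr.2.map N₀.mkQ = ⊤ := by
      rw [eq_top_iff]
      intro z _
      obtain ⟨x, rfl⟩ := Submodule.Quotient.mk_surjective _ z
      have hx : x ∈ pr.2 ⊔ N₀ := by rw [hsup2]; trivial
      obtain ⟨u, hu, v, hv, rfl⟩ := Submodule.mem_sup.mp hx
      refine ⟨u, hu, ?_⟩
      rw [Submodule.mkQ_apply, Submodule.Quotient.eq]
      simpa using Submodule.neg_mem _ hv
    have hTsec : IsSecondary pr.1 (⊤ : Submodule R (M ⧸ N₀)) := by
      have hne : pr.2.map N₀.mkQ ≠ ⊥ := by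
        rw [hmapT]
        intro h
        exact hN₀top (hquotbot h)
      have h2 := hsecpr.map_linear N₀.mkQ hne
      rwa [hmapT] at h2
    have hfg : (⊤ : Submodule R (M ⧸ N₀)).annihilator.radical.FG := by
      rw [hTsec.radical_annihilator]
      exact IsNoetherian.noetherian pr.1
    obtain ⟨m, hm⟩ := Ideal.exists_radical_pow_le_of_fg _ hfg
    rw [hTsec.radical_annihilator] at hm
    have hqTne : (pr.1 • ⊤ : Submodule R (M ⧸ N₀)) ≠ ⊤ := by
      intro h
      have hiter : ∀ k : ℕ, (⊤ : Submodule R (M ⧸ N₀)) = pr.1 ^ k • ⊤ := by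
        intro k
        induction k with
        | zero => rw [pow_zero, Ideal.one_eq_top, Submodule.top_smul]
        | succ k ih =>
          calc (⊤ : Submodule R (M ⧸ N₀)) = pr.1 • ⊤ := h.symm
          _ = pr.1 • (pr.1 ^ k • ⊤) := by rw [← ih]
          _ = pr.1 ^ (k + 1) • ⊤ := by rw [← Submodule.smul_assoc, smul_eq_mul, ← pow_succ']
      have hbot2 : (pr.1 ^ m • ⊤ : Submodule R (M ⧸ N₀)) = ⊥ := by
        rw [eq_bot_iff]
        refine Submodule.smul_le.mpr ?_
        intro r hr x _
        rw [Submodule.mem_bot]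
        exact Submodule.mem_annihilator.mp (hm hr) x Submodule.mem_top
      exact hN₀top (hquotbot (by rw [hiter m, hbot2]))
    apply le_antisymm
    · intro b hb
      by_contra hbq
      apply hqTne
      rw [eq_top_iff]
      intro z _
      obtain ⟨y, -, he⟩ := hTsec.2.1 b hbq z Submodule.mem_top
      obtain ⟨x, rfl⟩ := Submodule.Quotient.mk_surjective _ y
      have hbx : b • x ∈ N₀ ⊔ (pr.1 • ⊤ : Submodule R M) := by
        have h0 := Module.mem_annihilator.mp hb (Submodule.Quotient.mk x)
        rwa [← Submodule.Quotient.mk_smul, Submodule.Quotient.mk_eq_zero] at h0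
      obtain ⟨u, hu, v, hv, huv⟩ := Submodule.mem_sup.mp hbx
      have h2 : N₀.mkQ (b • x) ∈ (pr.1 • ⊤ : Submodule R (M ⧸ N₀)) := by
        have he2 : N₀.mkQ (b • x) = N₀.mkQ v := by
          rw [← huv, map_add]
          have : N₀.mkQ u = 0 := by
            rw [Submodule.mkQ_apply, Submodule.Quotient.mk_eq_zero]; exact hu
          rw [this, zero_add]
        rw [he2]
        have hmap : (pr.1 • ⊤ : Submodule R M).map N₀.mkQ =
            (pr.1 • ⊤ : Submodule R (M ⧸ N₀)) := by
          rw [Submodule.map_smul'', Submodule.map_top, Submodule.range_mkQ]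
        rw [← hmap]
        exact ⟨v, hv, rfl⟩
      have he3 : z = N₀.mkQ (b • x) := by
        rw [map_smul, Submodule.mkQ_apply, he]
      rw [he3]
      exact h2
    · intro b hb
      rw [Module.mem_annihilator]
      intro z
      obtain ⟨x, rfl⟩ := Submodule.Quotient.mk_surjective _ z
      rw [← Submodule.Quotient.mk_smul, Submodule.Quotient.mk_eq_zero]
      exact Submodule.mem_sup_right (Submodule.smul_mem_smul hb Submodule.mem_top)
  exact ⟨pr.1, hq_att, hqp, hPmap⟩

end Main

/-- Let `R` be a Noetherian ring and `M` an Artinian `R`-module. For any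
prime `p`, the attached primes of the co-localization `Hom_R(R_p, M)` as an `R_p`-module are
exactly the ideals `q R_p` for `q` an attached prime of `M` contained in `p`. -/
theorem attachedPrimes_colocalization
    (R M : Type*) [CommRing R] [IsNoetherianRing R]
    [AddCommGroup M] [Module R M] [IsArtinian R M]
    (p : Ideal R) [hp : p.IsPrime] :
    {P : Ideal (Localization.AtPrime p) |
        IsAttachedPrime (Localization.AtPrime p) (Localization.AtPrime p →ₗ[R] M) P}
      = {P : Ideal (Localization.AtPrime p) | ∃ q : Ideal R,
          IsAttachedPrime R M q ∧ q ≤ p ∧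
            P = q.map (algebraMap R (Localization.AtPrime p))} := by
  ext P
  simp only [Set.mem_setOf_eq]
  constructor
  · intro h
    exact exists_attached_of_attached_coloc p h
  · rintro ⟨q, hq, hqp, rfl⟩
    exact isAttached_map_of_isAttached p hq hqp
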